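/- If a pointwise decreasing transfinite sequence (f_α)_{α < ω₁} of upper semicontinuous functions on a Polish space X is indexed by ω₁, then it is eventually constant: there exists ξ < ω₁ such that f_α = f_ξ for all α ≥ ξ. -/

import Mathlib

open Ordinal Set

noncomputable section

/-- Parity of an ordinal: `a = γ + n` with `γ` limit, `n < ω`; even iff `n` is even. -/
def OrdEven (a : Ordinal) : Prop := a % 2 = 0

/-- Upper semicontinuity. -/
def USC {X : Type} [TopologicalSpace X] (f : X → ℝ) : Prop :=
  ∀ r : ℝ, IsOpen (f ⁻¹' Set.Iio r)

/-- The least ordinal where two transfinite sequences differ. -/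
def dOrd (f g : Ordinal → ℝ) : Ordinal := sInf {a | f a ≠ g a}

/-- The alternating lexicographical order on transfinite sequences of reals. -/
def AltLex (f g : Ordinal → ℝ) : Prop :=
  f ≠ g ∧ ((OrdEven (dOrd f g) ∧ f (dOrd f g) < g (dOrd f g)) ∨
    (¬ OrdEven (dOrd f g) ∧ g (dOrd f g) < f (dOrd f g)))

/-- `f` encodes a strictly decreasing countable transfinite sequence in `[0,1]`
with last element `0` at index `ξ` (padded with `0` beyond `ξ`). -/
def IsDSeqLen (f : Ordinal → ℝ) (ξ : Ordinal) : Prop :=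
  ξ < (Cardinal.aleph 1).ord ∧ (∀ a, f a ∈ Set.Icc (0:ℝ) 1) ∧
  (∀ a b, a < b → b ≤ ξ → f b < f a) ∧ (∀ a, ξ ≤ a → f a = 0)

/-- Membership in `[0,1]^{<ω₁}_{↘0}`. -/
def IsDSeq (f : Ordinal → ℝ) : Prop := ∃ ξ, IsDSeqLen f ξ

/-- An increasing `ω₁`-chain of open sets in a second countable space stabilizes
below `ω₁`. -/
lemma stab_aux {X : Type} [TopologicalSpace X] [SecondCountableTopology X]
    (g : Ordinal → Set X)
    (hopen : ∀ a, a < (Cardinal.aleph 1).ord → IsOpen (g a))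
    (hmono : ∀ a b, a ≤ b → b < (Cardinal.aleph 1).ord → g a ⊆ g b) :
    ∃ ξ < (Cardinal.aleph 1).ord, ∀ a, ξ ≤ a → a < (Cardinal.aleph 1).ord → g a = g ξ := by
  classical
  obtain ⟨B, hBc, -, hB⟩ := TopologicalSpace.exists_countable_basis X
  haveI := hBc.to_subtype
  set P : Set X → Prop := fun s => ∃ a, a < (Cardinal.aleph 1).ord ∧ s ⊆ g a with hP
  set h : B → Ordinal := fun b => if hb : P (b : Set X) then hb.choose else 0 with hdef
  have hh : ∀ b : B, h b < (Cardinal.aleph 1).ord := by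
    intro b
    by_cases hb : P (b : Set X)
    · simp only [hdef, dif_pos hb]
      exact hb.choose_spec.1
    · simp only [hdef, dif_neg hb]
      rw [pos_iff_ne_zero]
      intro h0
      have := Cardinal.ord_eq_zero.mp h0
      exact (Cardinal.aleph_pos 1).ne' this
  set ξ := ⨆ b : B, h b with hξdef
  have hξ : ξ < (Cardinal.aleph 1).ord := by
    have := Ordinal.iSup_lt_omega_one (f := h) (by simpa only [Cardinal.ord_aleph] using hh)
    simpa only [Cardinal.ord_aleph] using this
  refine ⟨ξ, hξ, ?_⟩
  intro a hξa ha
  apply Set.Subset.antisymm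
  · intro x hx
    obtain ⟨s, hsB, hxs, hsg⟩ := hB.exists_subset_of_mem_open hx (hopen a ha)
    have hPs : P s := ⟨a, ha, hsg⟩
    have hsub : s ⊆ g (h ⟨s, hsB⟩) := by
      simp only [hdef, dif_pos hPs]
      exact hPs.choose_spec.2
    have hle : h ⟨s, hsB⟩ ≤ ξ := Ordinal.le_iSup _ _
    exact hmono _ _ hle hξ (hsub hxs)
  · exact hmono _ _ hξa ha

theorem stmt_8 (X : Type) [TopologicalSpace X] [PolishSpace X] (f : Ordinal → X → ℝ)
    (husc : ∀ a, a < (Cardinal.aleph 1).ord → USC (f a))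
    (hdec : ∀ a b, a ≤ b → b < (Cardinal.aleph 1).ord → ∀ x, f b x ≤ f a x) :
    ∃ ξ < (Cardinal.aleph 1).ord,
      ∀ a, ξ ≤ a → a < (Cardinal.aleph 1).ord → f a = f ξ := by
  classical
  have key : ∀ q : ℚ, ∃ ξ < (Cardinal.aleph 1).ord, ∀ a, ξ ≤ a →
      a < (Cardinal.aleph 1).ord →
      (f a ⁻¹' Set.Iio (q : ℝ)) = f ξ ⁻¹' Set.Iio (q : ℝ) := by
    intro q
    exact stab_aux (fun a => f a ⁻¹' Set.Iio (q : ℝ)) (fun a ha => husc a ha q)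
      (fun a b hab hb x hx => lt_of_le_of_lt (hdec a b hab hb x) hx)
  choose ξq hξq hstab using key
  set ξ := ⨆ q : ℚ, ξq q with hξdef
  have hξ : ξ < (Cardinal.aleph 1).ord := by
    have := Ordinal.iSup_lt_omega_one (f := ξq) (by simpa only [Cardinal.ord_aleph] using hξq)
    simpa only [Cardinal.ord_aleph] using this
  refine ⟨ξ, hξ, ?_⟩
  intro a hle ha
  funext x
  by_contra hne
  have hlt : f a x < f ξ x := lt_of_le_of_ne (hdec ξ a hle ha x) hne
  obtain ⟨q, hq1, hq2⟩ := exists_rat_btwn hlt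
  have hq : ξq q ≤ ξ := Ordinal.le_iSup ξq q
  have hx : x ∈ f a ⁻¹' Set.Iio (q : ℝ) := hq1
  have h1 := hstab q a (hq.trans hle) ha
  have h2 := hstab q ξ hq hξ
  rw [h1, ← h2] at hx
  exact absurd hx (not_lt.mpr hq2.le)
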